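/- Specialize the parameters to t1 = −q^{−1} and t2 = 1, where q is an invertible indeterminate (i.e. work over ℤ[q, q^{−1}] ⊗ Q(ℤ[Λ])). Then for every v ∈ W, ∑_{w ≤ v} p(w,v) = ∏_{β ∈ R(v)} (1 − q^{−1} e^{β})/(1 − e^{β}), where R(v) is the inversion set of v and the sum is over all w ≤ v in the Bruhat order. -/

import Mathlib

open CoxeterSystem
open scoped Classical

/-- `E(λ) = e^{-λ} - 1`. -/
noncomputable def Eelt {Λ : Type*} [AddCommGroup Λ] {K : Type*} [Field K]
    (exp : Multiplicative Λ →* Kˣ) (lam : Λ) : K :=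
  ((exp (Multiplicative.ofAdd (-lam)) : Kˣ) : K) - 1

/-- The Bruhat order on `W`: `u ≤ v` iff there is a chain from `u` to `v` each of whose
steps multiplies on the right by a reflection while increasing the length. -/
def bruhatLE {r : ℕ} {W : Type*} [Group W] {M : CoxeterMatrix (Fin r)}
    (cs : CoxeterSystem M W) (u v : W) : Prop :=
  Relation.ReflTransGen
    (fun a b => (∃ t, cs.IsReflection t ∧ b = a * t) ∧ cs.length a < cs.length b) u v

/-- The strict Bruhat order on `W`. -/
def bruhatLT {r : ℕ} {W : Type*} [Group W] {M : CoxeterMatrix (Fin r)}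
    (cs : CoxeterSystem M W) (u v : W) : Prop :=
  Relation.TransGen
    (fun a b => (∃ t, cs.IsReflection t ∧ b = a * t) ∧ cs.length a < cs.length b) u v

/-- `p(w,v)`: the coefficient of `h_w` in the expansion `Y_v = ∑_w p(w,v) h_w` of the
Yang–Baxter basis element `Y_v` in the standard basis (`hb w = h w`). -/
noncomputable def pCoeff {W : Type*} {K : Type*} [Field K] {H : Type*} [Ring H] [Algebra K H]
    (hb : Module.Basis W K H) (Y : W → H) (w v : W) : K :=
  hb.repr (Y v) w


namespace YBProof

section GroupLemmas

variable {G : Type*} [Group G] {a b : G}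

lemma conj_pow_inv (hb : b * b = 1) {x : G} (hx : b * x * b = x⁻¹) (k : ℕ) :
    b * x ^ k * b = (x ^ k)⁻¹ := by
  induction k with
  | zero => simpa using hb
  | succ k ih =>
    have h1 : b * x ^ (k + 1) * b = (b * x ^ k * b) * (b * x * b) := by
      rw [pow_succ]
      calc b * (x ^ k * x) * b = b * x ^ k * ((b * b) * (x * b)) := by rw [hb]; group
        _ = (b * x ^ k * b) * (b * x * b) := by group
    rw [h1, ih, hx, ← mul_inv_rev, ← pow_succ']

lemma bxb (ha : a * a = 1) (hb : b * b = 1) : b * (a * b) * b = (a * b)⁻¹ := by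
  have ha' : a⁻¹ = a := inv_eq_of_mul_eq_one_right ha
  have hb' : b⁻¹ = b := inv_eq_of_mul_eq_one_right hb
  rw [mul_inv_rev, ha', hb']
  calc b * (a * b) * b = b * a * (b * b) := by group
    _ = b * a := by rw [hb]; group

lemma dihedralA (ha : a * a = 1) (hb : b * b = 1) (m : ℕ) :
    ((a * b) ^ m)⁻¹ * b * (a * b) ^ m = ((a * b) ^ (2 * m))⁻¹ * b := by
  have key := conj_pow_inv hb (bxb ha hb) m
  have hb' : b⁻¹ = b := inv_eq_of_mul_eq_one_right hb
  have h1 : b * (a * b) ^ m = ((a * b) ^ m)⁻¹ * b := by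
    calc b * (a * b) ^ m = (b * (a * b) ^ m * b) * b := by rw [mul_assoc, hb]; group
      _ = ((a * b) ^ m)⁻¹ * b := by rw [key]
  calc ((a * b) ^ m)⁻¹ * b * (a * b) ^ m = ((a * b) ^ m)⁻¹ * (b * (a * b) ^ m) := by group
    _ = ((a * b) ^ m)⁻¹ * (((a * b) ^ m)⁻¹ * b) := by rw [h1]
    _ = ((a * b) ^ m * (a * b) ^ m)⁻¹ * b := by rw [mul_inv_rev, mul_assoc]
    _ = ((a * b) ^ (2 * m))⁻¹ * b := by rw [two_mul, pow_add]

lemma dihedralB (ha : a * a = 1) (hb : b * b = 1) (m : ℕ) :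
    (b * (a * b) ^ m)⁻¹ * a * (b * (a * b) ^ m) = ((a * b) ^ (2 * m + 1))⁻¹ * b := by
  have ha' : a⁻¹ = a := inv_eq_of_mul_eq_one_right ha
  have hb' : b⁻¹ = b := inv_eq_of_mul_eq_one_right hb
  have hbab : b * a * b = (a * b)⁻¹ * b := by
    rw [mul_inv_rev, hb', ha']
  have h1 : b * (a * b) ^ m = ((a * b) ^ m)⁻¹ * b := by
    have key := conj_pow_inv hb (bxb ha hb) m
    calc b * (a * b) ^ m = (b * (a * b) ^ m * b) * b := by rw [mul_assoc, hb]; group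
      _ = ((a * b) ^ m)⁻¹ * b := by rw [key]
  calc (b * (a * b) ^ m)⁻¹ * a * (b * (a * b) ^ m)
      = ((a * b) ^ m)⁻¹ * (b⁻¹ * a * b) * (a * b) ^ m := by group
    _ = ((a * b) ^ m)⁻¹ * ((a * b)⁻¹ * b) * (a * b) ^ m := by rw [hb', hbab]
    _ = ((a * b) ^ m)⁻¹ * (a * b)⁻¹ * (b * (a * b) ^ m) := by group
    _ = ((a * b) ^ m)⁻¹ * (a * b)⁻¹ * (((a * b) ^ m)⁻¹ * b) := by rw [h1]
    _ = ((a * b) ^ (2 * m + 1))⁻¹ * b := by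
        generalize a * b = x
        rw [show 2 * m + 1 = m + 1 + m by ring, pow_add, pow_add, pow_one,
          mul_inv_rev, mul_inv_rev]
        group

end GroupLemmas

lemma frac_helper {K : Type*} [Field K] {x y q : K} (hxy : x * y = 1)
    (hx : x - 1 ≠ 0) (hy : 1 - y ≠ 0) (hq : q ≠ 0) :
    1 + (-q⁻¹ + 1) / (x - 1) = (1 - q⁻¹ * y) / (1 - y) := by
  have h1 : (1:K) + (-q⁻¹ + 1)/(x - 1) = (x - q⁻¹)/(x - 1) := by field_simp; ring
  rw [h1, div_eq_div_iff hx hy]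
  linear_combination (q⁻¹ - 1) * hxy

variable {B : Type*} {W : Type*} [Group W] {M : CoxeterMatrix B} (cs : CoxeterSystem M W)

local prefix:100 "s" => cs.simple
local prefix:100 "π" => cs.wordProd
local prefix:100 "ℓ" => cs.length
local prefix:100 "ris" => cs.rightInvSeq

/-- The function underlying the sign permutation. -/
noncomputable def sigmaFun (i : B) : W × ℤˣ → W × ℤˣ :=
  fun p => (s i * p.1 * s i, if p.1 = s i then -p.2 else p.2)

lemma sigmaFun_invol (i : B) (p : W × ℤˣ) : sigmaFun cs i (sigmaFun cs i p) = p := by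
  obtain ⟨t, ε⟩ := p
  simp only [sigmaFun]
  have h1 : s i * (s i * t * s i) * s i = t := by
    rw [← mul_assoc, ← mul_assoc, cs.simple_mul_simple_self, one_mul, mul_assoc,
      cs.simple_mul_simple_self, mul_one]
  have h2 : (s i * t * s i = s i) ↔ (t = s i) := by
    constructor
    · intro h
      have := congrArg (fun x => s i * x * s i) h
      simpa [← mul_assoc, cs.simple_mul_simple_self, mul_assoc] using this
    · rintro rfl; rw [cs.simple_mul_simple_self, one_mul]
  by_cases ht : t = s i
  · simp [ht, h2, cs.simple_mul_simple_self, h1]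
  · simp [ht, h2, h1]

/-- The sign permutation attached to a simple reflection. -/
noncomputable def sigma (i : B) : Equiv.Perm (W × ℤˣ) :=
  ⟨sigmaFun cs i, sigmaFun cs i, fun p => sigmaFun_invol cs i p, fun p => sigmaFun_invol cs i p⟩

lemma sigma_apply (i : B) (t : W) (ε : ℤˣ) :
    sigma cs i (t, ε) = (s i * t * s i, if t = s i then -ε else ε) := rfl

lemma sigma_mul_self (i : B) : sigma cs i * sigma cs i = 1 := by
  apply Equiv.ext
  intro p
  simp only [Equiv.Perm.mul_apply, Equiv.Perm.one_apply]
  exact sigmaFun_invol cs i p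

/-- The product of sigmas along a word computes conjugation together with the parity of the
number of occurrences in the right inversion sequence. -/
lemma prod_sigma_apply (ω : List B) (t : W) (ε : ℤˣ) :
    ((ω.map (sigma cs)).prod) (t, ε)
      = (π ω * t * (π ω)⁻¹, (-1) ^ ((ris ω).count t) * ε) := by
  induction ω generalizing t ε with
  | nil => simp [CoxeterSystem.rightInvSeq]
  | cons i ω ih =>
    rw [List.map_cons, List.prod_cons, Equiv.Perm.mul_apply, ih, sigma_apply]
    have hπ : π (i :: ω) = s i * π ω := cs.wordProd_cons i ω
    have hcond : (π ω * t * (π ω)⁻¹ = s i) ↔ (t = (π ω)⁻¹ * s i * π ω) := by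
      constructor
      · intro h; rw [← h]; group
      · intro h; rw [h]; group
    have hcount : (ris (i :: ω)).count t
        = (ris ω).count t + if t = (π ω)⁻¹ * s i * π ω then 1 else 0 := by
      show ((((π ω)⁻¹ * s i * π ω) :: ris ω).count t) = _
      rw [List.count_cons]
      simp only [beq_iff_eq]
      congr 1
      exact if_congr eq_comm rfl rfl
    apply Prod.ext
    · show s i * (π ω * t * (π ω)⁻¹) * s i = π (i :: ω) * t * (π (i :: ω))⁻¹
      rw [hπ, mul_inv_rev, cs.inv_simple]
      group
    · show (if π ω * t * (π ω)⁻¹ = s i then -((-1) ^ ((ris ω).count t) * ε)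
          else (-1) ^ ((ris ω).count t) * ε) = (-1) ^ ((ris (i :: ω)).count t) * ε
      rw [hcount, pow_add]
      by_cases hc : t = (π ω)⁻¹ * s i * π ω
      · rw [if_pos (hcond.mpr hc), if_pos hc, pow_one]
        rw [mul_neg_one, neg_mul]
      · rw [if_neg (fun h => hc (hcond.mp h)), if_neg hc, pow_zero, mul_one]

/-- The alternating list `[i, j, i, j, ...]` of length `2 * m`. -/
def altL (i j : B) : ℕ → List B
  | 0 => []
  | m + 1 => i :: j :: altL i j m

lemma wordProd_altL (i j : B) (m : ℕ) : π (altL i j m) = (s i * s j) ^ m := by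
  induction m with
  | zero => simp [altL, CoxeterSystem.wordProd]
  | succ m ih =>
    show π (i :: j :: altL i j m) = _
    rw [cs.wordProd_cons, cs.wordProd_cons, ih, pow_succ']
    group

lemma prod_sigma_altL (i j : B) (m : ℕ) :
    ((altL i j m).map (sigma cs)).prod = (sigma cs i * sigma cs j) ^ m := by
  induction m with
  | zero => simp [altL]
  | succ m ih =>
    show ((sigma cs i) :: (sigma cs j) :: (altL i j m).map (sigma cs)).prod = _
    rw [List.prod_cons, List.prod_cons, ih, pow_succ']
    group

/-- The right inversion sequence of the alternating word, explicitly. -/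
lemma rightInvSeq_altL (i j : B) (m : ℕ) :
    ris (altL i j m)
      = (List.range (2 * m)).reverse.map
          (fun k => ((s i * s j) ^ k)⁻¹ * s j) := by
  induction m with
  | zero => simp [altL, CoxeterSystem.rightInvSeq]
  | succ m ih =>
    have key : ris (altL i j (m + 1))
        = ((π (j :: altL i j m))⁻¹ * s i * (π (j :: altL i j m)))
          :: ((π (altL i j m))⁻¹ * s j * (π (altL i j m))) :: ris (altL i j m) := rfl
    rw [key, ih]
    have hπ2 : π (altL i j m) = (s i * s j) ^ m := wordProd_altL cs i j m
    have hπ1 : π (j :: altL i j m) = s j * (s i * s j) ^ m := by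
      rw [cs.wordProd_cons, hπ2]
    have e1 : (π (j :: altL i j m))⁻¹ * s i * (π (j :: altL i j m))
        = ((s i * s j) ^ (2 * m + 1))⁻¹ * s j := by
      rw [hπ1]
      exact dihedralB (cs.simple_mul_simple_self i) (cs.simple_mul_simple_self j) m
    have e2 : (π (altL i j m))⁻¹ * s j * (π (altL i j m))
        = ((s i * s j) ^ (2 * m))⁻¹ * s j := by
      rw [hπ2]
      exact dihedralA (cs.simple_mul_simple_self i) (cs.simple_mul_simple_self j) m
    have hrange : (List.range (2 * (m + 1))).reverse
        = (2 * m + 1) :: (2 * m) :: (List.range (2 * m)).reverse := by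
      rw [show 2 * (m + 1) = (2 * m + 1) + 1 by ring, List.range_succ, List.range_succ]
      simp
    rw [hrange, e1, e2]
    simp

/-- The sign permutations satisfy the Coxeter relations. -/
lemma sigma_liftable : CoxeterMatrix.IsLiftable M (sigma cs) := by
  intro i j
  rw [← prod_sigma_altL]
  apply Equiv.ext
  rintro ⟨t, ε⟩
  rw [prod_sigma_apply, Equiv.Perm.one_apply]
  have hπ : π (altL i j (M i j)) = 1 := by
    rw [wordProd_altL]; exact cs.simple_mul_simple_pow i j
  have hcount : Even ((ris (altL i j (M i j))).count t) := by
    rw [rightInvSeq_altL]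
    have hmapeq : (List.range (2 * M i j)).reverse.map
        (fun k => ((s i * s j) ^ k)⁻¹ * s j)
        = ((List.range (2 * M i j)).map (fun k => ((s i * s j) ^ k)⁻¹ * s j)).reverse := by
      rw [List.map_reverse]
    rw [hmapeq, List.count_reverse, two_mul, List.range_add, List.map_append, List.map_map]
    have : (List.range (M i j)).map
          ((fun k => ((s i * s j) ^ k)⁻¹ * s j) ∘ (fun x => M i j + x))
        = (List.range (M i j)).map (fun k => ((s i * s j) ^ k)⁻¹ * s j) := by
      apply List.map_congr_left
      intro k _
      show ((s i * s j) ^ (M i j + k))⁻¹ * s j = ((s i * s j) ^ k)⁻¹ * s j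
      rw [pow_add, cs.simple_mul_simple_pow i j, one_mul]
    rw [this, List.count_append]
    exact ⟨_, rfl⟩
  apply Prod.ext
  · show π (altL i j (M i j)) * t * (π (altL i j (M i j)))⁻¹ = t
    rw [hπ]; group
  · show (-1) ^ ((ris (altL i j (M i j))).count t) * ε = ε
    rw [Even.neg_one_pow hcount, one_mul]

/-- The sign representation of the Coxeter group. -/
noncomputable def phi : W →* Equiv.Perm (W × ℤˣ) := cs.lift ⟨sigma cs, sigma_liftable cs⟩

lemma phi_simple (i : B) : phi cs (s i) = sigma cs i := cs.lift_apply_simple _ i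

lemma phi_wordProd (ω : List B) : phi cs (π ω) = ((ω.map (sigma cs)).prod) := by
  show phi cs (ω.map cs.simple).prod = _
  rw [map_list_prod, List.map_map]
  congr 1
  apply List.map_congr_left
  intro i _
  exact phi_simple cs i

/-- The sign of `t` at `w`. -/
noncomputable def sgn (w t : W) : ℤˣ := ((phi cs w) (t, 1)).2

lemma sgn_wordProd (ω : List B) (t : W) :
    sgn cs (π ω) t = (-1) ^ ((ris ω).count t) := by
  rw [sgn, phi_wordProd, prod_sigma_apply, mul_one]

lemma phi_apply (w t : W) (ε : ℤˣ) :
    phi cs w (t, ε) = (w * t * w⁻¹, sgn cs w t * ε) := by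
  obtain ⟨ω, rfl⟩ := cs.wordProd_surjective w
  rw [phi_wordProd, prod_sigma_apply, sgn_wordProd]

lemma mem_rightInvSeq_iff_sgn {ω : List B} (hω : cs.IsReduced ω) (t : W) :
    t ∈ ris ω ↔ sgn cs (π ω) t = -1 := by
  rw [sgn_wordProd]
  constructor
  · intro h
    rw [List.count_eq_one_of_mem hω.nodup_rightInvSeq h, pow_one]
  · intro h
    by_contra hmem
    rw [List.count_eq_zero_of_not_mem hmem, pow_zero] at h
    exact absurd h (by decide)

lemma sgn_mul_reflection (w : W) {t : W} (ht : cs.IsReflection t) :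
    sgn cs (w * t) t = - sgn cs w t := by
  have key : phi cs t (t, (1:ℤˣ)) = (t, -1) := by
    obtain ⟨u, i, htt⟩ := ht
    have h1 : u⁻¹ * t * (u⁻¹)⁻¹ = s i := by rw [htt]; group
    have h2 : phi cs u⁻¹ (t, 1) = (s i, sgn cs u⁻¹ t * 1) := by rw [phi_apply, h1]
    have hcomp : phi cs t (t, (1:ℤˣ))
        = phi cs u (phi cs (s i) (phi cs u⁻¹ (t, 1))) := by
      rw [← Equiv.Perm.mul_apply, ← Equiv.Perm.mul_apply, ← map_mul, ← map_mul,
        ← htt]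
    have h4 : phi cs u (s i, sgn cs u⁻¹ t * 1) = (t, 1) := by
      rw [← h2, ← Equiv.Perm.mul_apply, ← map_mul, mul_inv_cancel, map_one,
        Equiv.Perm.one_apply]
    rw [phi_apply] at h4
    have h5 : u * s i * u⁻¹ = t := htt.symm
    have h6 : sgn cs u (s i) * (sgn cs u⁻¹ t * 1) = 1 := congrArg Prod.snd h4
    rw [hcomp, h2, phi_simple, sigma_apply, if_pos rfl]
    rw [show s i * s i * s i = s i by rw [cs.simple_mul_simple_self, one_mul]]
    rw [phi_apply, Prod.mk.injEq]
    exact ⟨h5, by rw [mul_neg, h6]⟩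
  calc sgn cs (w * t) t = (phi cs (w * t) (t, 1)).2 := rfl
    _ = (phi cs w (phi cs t (t, 1))).2 := by rw [map_mul, Equiv.Perm.mul_apply]
    _ = (phi cs w (t, -1)).2 := by rw [key]
    _ = sgn cs w t * (-1) := by rw [phi_apply]
    _ = - sgn cs w t := by rw [mul_neg_one]

/-- Strong exchange property: a right inversion of `w` occurs in the right inversion sequence
of every reduced word for `w`. -/
theorem strong_exchange {w t : W} (ht : cs.IsReflection t) (hlt : ℓ (w * t) < ℓ w)
    {ω : List B} (hω : cs.IsReduced ω) (hπ : π ω = w) : t ∈ ris ω := by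
  rw [mem_rightInvSeq_iff_sgn cs hω, hπ]
  by_contra h
  have h1 : sgn cs w t = 1 := (Int.units_eq_one_or _).resolve_right h
  obtain ⟨ω', hω', hπ'⟩ := cs.exists_reduced_word' (w * t)
  have ht2 : w * t * t = w := by rw [mul_assoc, ht.mul_self, mul_one]
  have h2 : sgn cs (w * t * t) t = - sgn cs (w * t) t := sgn_mul_reflection cs (w * t) ht
  rw [ht2, h1] at h2
  have h3 : sgn cs (w * t) t = -1 := by rw [← neg_neg (sgn cs (w * t) t), ← h2]
  have h4 : t ∈ ris ω' := by
    rw [mem_rightInvSeq_iff_sgn cs hω', ← hπ']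
    exact h3
  have h5 := (cs.isRightInversion_of_mem_rightInvSeq hω' h4).2
  rw [← hπ', ht2] at h5
  omega

theorem strong_exchange' {w t : W} (ht : cs.IsReflection t) (hlt : ℓ (w * t) < ℓ w)
    {ω : List B} (hω : cs.IsReduced ω) (hπ : π ω = w) :
    ∃ j, j < ω.length ∧ w * t = π (ω.eraseIdx j) := by
  have hmem := strong_exchange cs ht hlt hω hπ
  obtain ⟨j, hj, hget⟩ := List.mem_iff_getElem.mp hmem
  rw [cs.length_rightInvSeq] at hj
  refine ⟨j, hj, ?_⟩
  rw [← hπ, ← cs.wordProd_mul_getD_rightInvSeq ω j]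
  congr 1
  rw [← hget, List.getD_eq_getElem]


/-- The covering-type relation generating the Bruhat order. -/
def brel (a b : W) : Prop := (∃ t, cs.IsReflection t ∧ b = a * t) ∧ ℓ a < ℓ b

/-- The Bruhat order. -/
def ble (a b : W) : Prop := Relation.ReflTransGen (brel cs) a b

lemma ble_refl (w : W) : ble cs w w := Relation.ReflTransGen.refl

lemma ble_trans {u v w : W} (h1 : ble cs u v) (h2 : ble cs v w) : ble cs u w :=
  Relation.ReflTransGen.trans h1 h2

lemma ble_of_brel {u v : W} (h : brel cs u v) : ble cs u v :=
  Relation.ReflTransGen.single h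

lemma length_le_of_ble {u v : W} (h : ble cs u v) : ℓ u ≤ ℓ v := by
  induction h with
  | refl => exact le_refl _
  | tail _ hstep ih => exact le_trans ih (le_of_lt hstep.2)

lemma ble_mul_simple_of_lt {v : W} {i : B} (h : ℓ v < ℓ (v * s i)) :
    ble cs v (v * s i) :=
  ble_of_brel cs ⟨⟨s i, cs.isReflection_simple i, rfl⟩, h⟩

lemma mul_simple_ble_of_lt {v : W} {i : B} (h : ℓ (v * s i) < ℓ v) :
    ble cs (v * s i) v := by
  apply ble_of_brel cs
  refine ⟨⟨s i, cs.isReflection_simple i, ?_⟩, h⟩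
  rw [mul_assoc, cs.simple_mul_simple_self, mul_one]

lemma conj_simple_eq (w₁ t : W) (i : B) :
    (w₁ * s i) * (s i * t * s i) = w₁ * t * s i := by
  have h : (w₁ * s i) * (s i * t * s i) = w₁ * ((s i * s i) * (t * s i)) := by group
  rw [h, cs.simple_mul_simple_self, one_mul, ← mul_assoc]

lemma isReflection_conj_simple {t : W} (ht : cs.IsReflection t) (i : B) :
    cs.IsReflection (s i * t * s i) := by
  have := ht.conj (s i)
  rwa [cs.inv_simple] at this

/-- Erasing one letter from a reduced word produces an element below in Bruhat order. -/
lemma eraseIdx_ble {ω : List B} (hred : cs.IsReduced ω) (j : ℕ) (hj : j < ω.length) :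
    ble cs (π (ω.eraseIdx j)) (π ω) := by
  set t := (ris ω).getD j 1 with htdef
  have hmem : t ∈ ris ω := by
    have hj' : j < (ris ω).length := by rw [cs.length_rightInvSeq]; exact hj
    rw [htdef, List.getD_eq_getElem _ _ hj']
    exact List.getElem_mem hj'
  have htr : cs.IsReflection t := cs.isReflection_of_mem_rightInvSeq ω hmem
  have heq : π ω * t = π (ω.eraseIdx j) := cs.wordProd_mul_getD_rightInvSeq ω j
  have hlt : ℓ (π (ω.eraseIdx j)) < ℓ (π ω) := by
    calc ℓ (π (ω.eraseIdx j)) ≤ (ω.eraseIdx j).length := cs.length_wordProd_le _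
      _ < ω.length := by rw [List.length_eraseIdx, if_pos hj]; omega
      _ = ℓ (π ω) := hred.symm
  apply ble_of_brel cs
  refine ⟨⟨t, htr, ?_⟩, hlt⟩
  rw [← heq, mul_assoc, htr.mul_self, mul_one]

/-- The lifting property (Deodhar's property Z), together with its companion:
if `u ≤ v` then (a) `ℓ(vs) > ℓ(v)` implies `us ≤ vs`, and (b) `ℓ(vs) < ℓ(v)` implies
`us ≤ v`. -/
theorem liftZ : ∀ n v, ℓ v = n → ∀ u, ble cs u v → ∀ i : B,
    (ℓ v < ℓ (v * s i) → ble cs (u * s i) (v * s i)) ∧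
    (ℓ (v * s i) < ℓ v → ble cs (u * s i) v) := by
  intro n
  induction n using Nat.strong_induction_on with
  | _ n IH =>
  intro v hv u huv i
  by_cases hus : ℓ (u * s i) < ℓ u
  · have h1 : ble cs (u * s i) u := mul_simple_ble_of_lt cs hus
    constructor
    · intro h
      exact ble_trans cs (ble_trans cs h1 huv) (ble_mul_simple_of_lt cs h)
    · intro h
      exact ble_trans cs h1 huv
  · rcases Relation.ReflTransGen.cases_tail huv with heq | ⟨w₁, hw₁, hstep⟩
    · subst heq
      constructor
      · intro h
        exact ble_refl cs _
      · intro h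
        exact mul_simple_ble_of_lt cs h
    · obtain ⟨⟨t, ht, rfl⟩, hlen⟩ := hstep
      have hw₁n : ℓ w₁ < n := by rw [← hv]; exact hlen
      rcases Nat.lt_or_ge (ℓ w₁) (ℓ (w₁ * s i)) with hws | hws' 
      · -- ℓ(w₁ s) > ℓ w₁
        have h2 : ble cs (u * s i) (w₁ * s i) := (IH (ℓ w₁) hw₁n w₁ rfl u hw₁ i).1 hws
        have hw₁s : ℓ (w₁ * s i) = ℓ w₁ + 1 := by
          rcases cs.length_mul_simple w₁ i with h' | h' <;> omega
        constructor
        · intro h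
          apply ble_trans cs h2
          apply ble_of_brel cs
          refine ⟨⟨s i * t * s i, isReflection_conj_simple cs ht i, ?_⟩, ?_⟩
          · rw [conj_simple_eq]
          · omega
        · intro h
          apply ble_trans cs h2
          -- show `ble (w₁ * s i) (w₁ * t)`
          set v := w₁ * t with hvdef
          obtain ⟨ω₀, hω₀red, hπ₀⟩ := cs.exists_reduced_word' (v * s i)
          have hπω : π (ω₀ ++ [i]) = v := by
            rw [cs.wordProd_append, cs.wordProd_singleton, ← hπ₀, mul_assoc,
              cs.simple_mul_simple_self, mul_one]
          have hlv : ℓ v = ℓ (v * s i) + 1 := by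
            rcases cs.length_mul_simple v i with h' | h' <;> omega
          have hred : cs.IsReduced (ω₀ ++ [i]) := by
            show ℓ (π (ω₀ ++ [i])) = _
            rw [hπω, List.length_append, List.length_singleton, ← hω₀red, ← hπ₀]
            omega
          have hvt : v * t = w₁ := by
            rw [hvdef, mul_assoc, ht.mul_self, mul_one]
          have hvtlt : ℓ (v * t) < ℓ v := by rw [hvt]; exact hlen
          obtain ⟨j, hj, herase⟩ := strong_exchange' cs ht hvtlt hred hπω
          rw [hvt] at herase
          rw [List.length_append, List.length_singleton] at hj
          rcases Nat.lt_or_ge j ω₀.length with hjlt | hjge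
          · rw [List.eraseIdx_append_of_lt_length hjlt] at herase
            have hw₁s2 : w₁ * s i = π (ω₀.eraseIdx j) := by
              rw [herase, cs.wordProd_append, cs.wordProd_singleton, mul_assoc,
                cs.simple_mul_simple_self, mul_one]
            rw [hw₁s2]
            refine ble_trans cs (eraseIdx_ble cs hω₀red j hjlt) ?_
            rw [← hπ₀]
            exact mul_simple_ble_of_lt cs h
          · have hj' : j = ω₀.length := by omega
            rw [List.eraseIdx_append_of_length_le (le_of_eq hj'.symm), hj'] at herase
            simp only [Nat.sub_self, List.eraseIdx_zero, List.tail_cons,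
              List.append_nil] at herase
            have : w₁ * s i = v := by
              rw [herase, ← hπ₀, mul_assoc, cs.simple_mul_simple_self, mul_one]
            rw [this]
            exact ble_refl cs v
      · -- ℓ(w₁ s) < ℓ w₁
        have hws : ℓ (w₁ * s i) < ℓ w₁ :=
          lt_of_le_of_ne hws' (cs.length_mul_simple_ne w₁ i)
        have h2 : ble cs (u * s i) w₁ := (IH (ℓ w₁) hw₁n w₁ rfl u hw₁ i).2 hws
        have h3 : ble cs w₁ (w₁ * t) := ble_of_brel cs ⟨⟨t, ht, rfl⟩, hlen⟩
        constructor
        · intro h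
          exact ble_trans cs (ble_trans cs h2 h3) (ble_mul_simple_of_lt cs h)
        · intro h
          exact ble_trans cs h2 h3

/-- Lifting property, usable form. -/
theorem ble_mul_simple_of_ble {u v : W} (huv : ble cs u v) (i : B)
    (h : ℓ v < ℓ (v * s i)) : ble cs (u * s i) (v * s i) :=
  (liftZ cs (ℓ v) v rfl u huv i).1 h


section Hecke

variable {K : Type*} [Field K] {H : Type*} [Ring H] [Algebra K H]

/-- The linear functional summing the coordinates in the basis `hb`. -/
noncomputable def eps [Fintype W] (hb : Module.Basis W K H) : H →ₗ[K] K where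
  toFun x := ∑ w, hb.repr x w
  map_add' x y := by simp [Finset.sum_add_distrib]
  map_smul' c x := by simp [Finset.mul_sum]

lemma eps_apply [Fintype W] (hb : Module.Basis W K H) (x : H) :
    eps hb x = ∑ w, hb.repr x w := rfl

lemma eps_basis [Fintype W] (hb : Module.Basis W K H) (u : W) : eps hb (hb u) = 1 := by
  rw [eps_apply]
  simp [Module.Basis.repr_self, Finsupp.single_apply]

lemma hs_sq (h : W → H) (t1 t2 : K)
    (hquad : ∀ i : B, (h (s i) - algebraMap K H t1) * (h (s i) - algebraMap K H t2) = 0)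
    (i : B) :
    h (s i) * h (s i)
      = algebraMap K H (t1 + t2) * h (s i) - algebraMap K H (t1 * t2) := by
  have hq := hquad i
  set x := h (s i) with hx
  rw [sub_mul, mul_sub, mul_sub, sub_eq_zero] at hq
  have hcomm : x * algebraMap K H t2 = algebraMap K H t2 * x := (Algebra.commutes t2 x).symm
  rw [hcomm, sub_eq_iff_eq_add] at hq
  rw [hq, map_add, map_mul, add_mul]
  abel

lemma h_mul_simple_down (h : W → H)
    (hmul : ∀ u v : W, ℓ (u * v) = ℓ u + ℓ v → h (u * v) = h u * h v)
    (t1 t2 : K)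
    (hquad : ∀ i : B, (h (s i) - algebraMap K H t1) * (h (s i) - algebraMap K H t2) = 0)
    {u : W} {i : B} (hlen : ℓ (u * s i) + 1 = ℓ u) :
    h u * h (s i)
      = algebraMap K H (t1 + t2) * h u - algebraMap K H (t1 * t2) * h (u * s i) := by
  have hu : (u * s i) * s i = u := by rw [mul_assoc, cs.simple_mul_simple_self, mul_one]
  have hlen2 : ℓ ((u * s i) * s i) = ℓ (u * s i) + ℓ (s i) := by
    rw [hu, cs.length_simple]; omega
  have h1 : h ((u * s i) * s i) = h (u * s i) * h (s i) := hmul _ _ hlen2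
  rw [hu] at h1
  rw [h1, mul_assoc, hs_sq cs h t1 t2 hquad i, mul_sub]
  rw [← mul_assoc, ← Algebra.commutes (t1 + t2) (h (u * s i)), mul_assoc, ← h1]
  rw [← Algebra.commutes (t1 * t2) (h (u * s i))]

lemma h_mul_simple_up (h : W → H)
    (hmul : ∀ u v : W, ℓ (u * v) = ℓ u + ℓ v → h (u * v) = h u * h v)
    {u : W} {i : B} (hlen : ℓ (u * s i) = ℓ u + 1) :
    h u * h (s i) = h (u * s i) := by
  have : ℓ (u * s i) = ℓ u + ℓ (s i) := by rw [cs.length_simple]; omega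
  rw [hmul u (s i) this]

lemma eps_h_mul_simple [Fintype W] (hb : Module.Basis W K H) (h : W → H)
    (hbasis : ∀ w : W, hb w = h w)
    (hmul : ∀ u v : W, ℓ (u * v) = ℓ u + ℓ v → h (u * v) = h u * h v)
    (t1 t2 : K)
    (hquad : ∀ i : B, (h (s i) - algebraMap K H t1) * (h (s i) - algebraMap K H t2) = 0)
    (hsum : t1 + t2 - t1 * t2 = 1)
    (u : W) (i : B) :
    eps hb (h u * h (s i)) = 1 := by
  rcases cs.length_mul_simple u i with hl | hl
  · rw [h_mul_simple_up cs h hmul hl, ← hbasis, eps_basis]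
  · rw [h_mul_simple_down cs h hmul t1 t2 hquad hl]
    rw [← Algebra.smul_def, ← Algebra.smul_def, map_sub, map_smul, map_smul]
    rw [← hbasis, ← hbasis, eps_basis, eps_basis]
    rw [smul_eq_mul, smul_eq_mul, mul_one, mul_one]
    exact hsum

lemma eps_mul_simple [Fintype W] (hb : Module.Basis W K H) (h : W → H)
    (hbasis : ∀ w : W, hb w = h w)
    (hmul : ∀ u v : W, ℓ (u * v) = ℓ u + ℓ v → h (u * v) = h u * h v)
    (t1 t2 : K)
    (hquad : ∀ i : B, (h (s i) - algebraMap K H t1) * (h (s i) - algebraMap K H t2) = 0)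
    (hsum : t1 + t2 - t1 * t2 = 1)
    (x : H) (i : B) :
    eps hb (x * h (s i)) = eps hb x := by
  have hext : (eps hb).comp (LinearMap.mulRight K (h (s i))) = eps hb := by
    apply Module.Basis.ext hb
    intro u
    rw [LinearMap.comp_apply, LinearMap.mulRight_apply, hbasis]
    rw [eps_h_mul_simple cs hb h hbasis hmul t1 t2 hquad hsum u i, ← hbasis, eps_basis]
  have := LinearMap.congr_fun hext x
  rwa [LinearMap.comp_apply, LinearMap.mulRight_apply] at this

/-- The span of the basis elements indexed by the Bruhat-lower set of `v`. -/
noncomputable def lowSpan (h : W → H) (v : W) : Submodule K H :=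
  Submodule.span K ((fun u => h u) '' {u | ble cs u v})

lemma lowSpan_mono (h : W → H) {v v' : W} (hvv' : ble cs v v') :
    lowSpan (K := K) cs h v ≤ lowSpan (K := K) cs h v' := by
  apply Submodule.span_mono
  apply Set.image_mono
  intro u hu
  exact ble_trans cs hu hvv'

lemma h_mem_lowSpan (h : W → H) {u v : W} (huv : ble cs u v) :
    h u ∈ lowSpan (K := K) cs h v :=
  Submodule.subset_span ⟨u, huv, rfl⟩

lemma mem_lowSpan_mul_simple (h : W → H)
    (hmul : ∀ u v : W, ℓ (u * v) = ℓ u + ℓ v → h (u * v) = h u * h v)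
    (t1 t2 : K)
    (hquad : ∀ i : B, (h (s i) - algebraMap K H t1) * (h (s i) - algebraMap K H t2) = 0)
    {v : W} {i : B} (hlen : ℓ v < ℓ (v * s i)) {x : H}
    (hx : x ∈ lowSpan (K := K) cs h v) :
    x * h (s i) ∈ lowSpan (K := K) cs h (v * s i) := by
  induction hx using Submodule.span_induction with
  | mem y hy =>
    obtain ⟨u, huv, rfl⟩ := hy
    have hule : ble cs u (v * s i) := ble_trans cs huv (ble_mul_simple_of_lt cs hlen)
    have husle : ble cs (u * s i) (v * s i) := ble_mul_simple_of_ble cs huv i hlen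
    rcases cs.length_mul_simple u i with hl | hl
    · rw [h_mul_simple_up cs h hmul hl]
      exact h_mem_lowSpan (K := K) cs h husle
    · rw [h_mul_simple_down cs h hmul t1 t2 hquad hl]
      rw [← Algebra.smul_def, ← Algebra.smul_def]
      exact Submodule.sub_mem _
        (Submodule.smul_mem _ _ (h_mem_lowSpan (K := K) cs h hule))
        (Submodule.smul_mem _ _ (h_mem_lowSpan (K := K) cs h husle))
  | zero => rw [zero_mul]; exact Submodule.zero_mem _
  | add y z _ _ hy hz => rw [add_mul]; exact Submodule.add_mem _ hy hz
  | smul c y _ hy => rw [smul_mul_assoc]; exact Submodule.smul_mem _ _ hy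

lemma repr_eq_zero_of_mem_lowSpan [Fintype W] (hb : Module.Basis W K H) (h : W → H)
    (hbasis : ∀ w : W, hb w = h w) {v : W} {x : H}
    (hx : x ∈ lowSpan (K := K) cs h v) {w : W} (hw : ¬ ble cs w v) :
    hb.repr x w = 0 := by
  induction hx using Submodule.span_induction with
  | mem y hy =>
    obtain ⟨u, huv, rfl⟩ := hy
    show (hb.repr (h u)) w = 0
    rw [← hbasis, Module.Basis.repr_self, Finsupp.single_apply]
    rw [if_neg]
    intro heq
    exact hw (heq ▸ huv)
  | zero => simp
  | add y z _ _ hy hz => rw [map_add, Finsupp.add_apply, hy, hz, add_zero]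
  | smul c y _ hy => rw [map_smul, Finsupp.smul_apply, hy, smul_zero]

end Hecke

end YBProof

open YBProof in
/-- with the parameters specialized to `t1 = -q⁻¹`, `t2 = 1` (`q` invertible),
`∑_{w ≤ v} p(w,v) = ∏_{β ∈ R(v)} (1 − q⁻¹ e^β)/(1 − e^β)`, the product being over the
inversion set `R(v) = {β_j = s_{i_1} ⋯ s_{i_{j-1}}(α_{i_j})}` of a reduced expression
`v = s_{i_1} ⋯ s_{i_ℓ}`. -/
theorem sum_pCoeff_eq_prod_inversions
    {r : ℕ} {W : Type*} [Group W] [Fintype W] {M : CoxeterMatrix (Fin r)}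
    (cs : CoxeterSystem M W)
    {Λ : Type*} [AddCommGroup Λ] (wΛ : W →* Multiplicative (AddAut Λ)) (α : Fin r → Λ)
    (coroot : Fin r → (Λ →+ ℤ))
    (hact : ∀ (i : Fin r) (lam : Λ), wΛ (cs.simple i) lam = lam - (coroot i lam) • α i)
    (hαα : ∀ i : Fin r, coroot i (α i) = 2)
    (hindep : LinearIndependent ℤ α)
    (hcart : ∀ i j : Fin r, i ≠ j →
      (M.M i j = 2 ∧ coroot i (α j) = 0 ∧ coroot j (α i) = 0) ∨
      (M.M i j = 3 ∧ coroot i (α j) = -1 ∧ coroot j (α i) = -1) ∨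
      (M.M i j = 4 ∧ coroot i (α j) * coroot j (α i) = 2 ∧
        coroot i (α j) < 0 ∧ coroot j (α i) < 0) ∨
      (M.M i j = 6 ∧ coroot i (α j) * coroot j (α i) = 3 ∧
        coroot i (α j) < 0 ∧ coroot j (α i) < 0))
    {K : Type*} [Field K] (exp : Multiplicative Λ →* Kˣ)
    (hexp_inj : Function.Injective exp)
    (t1 t2 : K) (wK : W →* RingAut K)
    (hwexp : ∀ (w : W) (lam : Λ),
      wK w ((exp (Multiplicative.ofAdd lam) : Kˣ) : K)
        = ((exp (Multiplicative.ofAdd (wΛ w lam)) : Kˣ) : K))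
    (hwt1 : ∀ w : W, wK w t1 = t1) (hwt2 : ∀ w : W, wK w t2 = t2)
    (q : K) (hq : q ≠ 0) (ht1 : t1 = -q⁻¹) (ht2 : t2 = 1)
    {H : Type*} [Ring H] [Algebra K H]
    (h : W → H) (hb : Module.Basis W K H)
    (hbasis : ∀ w : W, hb w = h w)
    (hone : h 1 = 1)
    (hmul : ∀ u v : W, cs.length (u * v) = cs.length u + cs.length v →
      h (u * v) = h u * h v)
    (hquad : ∀ i : Fin r,
      (h (cs.simple i) - algebraMap K H t1) * (h (cs.simple i) - algebraMap K H t2) = 0)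
    (Y : W → H) (hY1 : Y 1 = 1)
    (hYrec : ∀ (w : W) (i : Fin r), cs.length (w * cs.simple i) = cs.length w + 1 →
      Y (w * cs.simple i)
        = Y w * (h (cs.simple i) + algebraMap K H ((t1 + t2) / wK w (Eelt exp (α i)))))
    (v : W) (l : List (Fin r)) (hl : cs.wordProd l = v) (hred : cs.IsReduced l) :
    ∑ w ∈ Finset.univ.filter (fun w => bruhatLE cs w v), pCoeff hb Y w v
      = ∏ j : Fin l.length,
          (1 - q⁻¹ * ((exp (Multiplicative.ofAdd
              (wΛ (cs.wordProd (l.take j)) (α (l.get j)))) : Kˣ) : K)) /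
          (1 - ((exp (Multiplicative.ofAdd
              (wΛ (cs.wordProd (l.take j)) (α (l.get j)))) : Kˣ) : K)) := by
  classical
  have hsum : t1 + t2 - t1 * t2 = 1 := by rw [ht1, ht2]; ring
  have hexp_ne : ∀ lam : Λ, lam ≠ 0 →
      ((exp (Multiplicative.ofAdd lam) : Kˣ) : K) ≠ 1 := by
    intro lam hlam hcon
    apply hlam
    have h1 : exp (Multiplicative.ofAdd lam) = 1 :=
      Units.ext (show ((exp (Multiplicative.ofAdd lam) : Kˣ) : K) = ((1 : Kˣ) : K) by
        simpa using hcon)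
    have h2 : exp (Multiplicative.ofAdd lam) = exp 1 := by rw [h1, map_one]
    have h3 := hexp_inj h2
    exact ofAdd_eq_one.mp h3
  have hα0 : ∀ (w : W) (i : Fin r), wΛ w (α i) ≠ 0 := by
    intro w i h0
    exact hindep.ne_zero i ((Multiplicative.toAdd (wΛ w)).injective (h0.trans (map_zero (Multiplicative.toAdd (wΛ w))).symm))
  have hlpre : ∀ j, j ≤ l.length → cs.length (cs.wordProd (l.take j)) = j := by
    intro j hj
    have hr := hred.take j
    have h2 : cs.length (cs.wordProd (l.take j)) = (l.take j).length := hr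
    rw [List.length_take, min_eq_left hj] at h2
    exact h2
  have hsplit : ∀ (j : ℕ) (hj : j < l.length),
      cs.wordProd (l.take (j+1)) = cs.wordProd (l.take j) * cs.simple (l.get ⟨j, hj⟩) := by
    intro j hj
    have : l.take (j+1) = l.take j ++ [l.get ⟨j, hj⟩] := by
      rw [List.take_succ, List.getElem?_eq_getElem hj]
      simp
    rw [this, cs.wordProd_append, cs.wordProd_singleton]
  have hstep_len : ∀ (j : ℕ) (hj : j < l.length),
      cs.length (cs.wordProd (l.take j) * cs.simple (l.get ⟨j, hj⟩))
        = cs.length (cs.wordProd (l.take j)) + 1 := by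
    intro j hj
    rw [← hsplit j hj, hlpre (j+1) (by omega), hlpre j (by omega)]
  have main : ∀ j, j ≤ l.length →
      (eps hb (Y (cs.wordProd (l.take j)))
        = ∏ k ∈ Finset.range j, (if hk : k < l.length then
            (1 - q⁻¹ * ((exp (Multiplicative.ofAdd
                (wΛ (cs.wordProd (l.take k)) (α (l.get ⟨k, hk⟩)))) : Kˣ) : K)) /
            (1 - ((exp (Multiplicative.ofAdd
                (wΛ (cs.wordProd (l.take k)) (α (l.get ⟨k, hk⟩)))) : Kˣ) : K))
          else 1)) ∧
      Y (cs.wordProd (l.take j)) ∈ lowSpan (K := K) cs h (cs.wordProd (l.take j)) := by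
    intro j
    induction j with
    | zero =>
      intro _
      constructor
      · rw [List.take_zero, cs.wordProd_nil, hY1, ← hone, ← hbasis, eps_basis]
        simp
      · rw [List.take_zero, cs.wordProd_nil, hY1, ← hone]
        exact h_mem_lowSpan cs h (ble_refl cs 1)
    | succ j ih =>
      intro hj1
      have hj : j < l.length := by omega
      obtain ⟨ih1, ih2⟩ := ih (by omega)
      have hYs := hYrec (cs.wordProd (l.take j)) (l.get ⟨j, hj⟩) (hstep_len j hj)
      have hw1 : cs.wordProd (l.take (j+1))
          = cs.wordProd (l.take j) * cs.simple (l.get ⟨j, hj⟩) := hsplit j hj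
      have hxy : ((exp (Multiplicative.ofAdd (-(wΛ (cs.wordProd (l.take j))
            (α (l.get ⟨j, hj⟩))))) : Kˣ) : K)
          * ((exp (Multiplicative.ofAdd (wΛ (cs.wordProd (l.take j))
            (α (l.get ⟨j, hj⟩)))) : Kˣ) : K) = 1 := by
        rw [← Units.val_mul, ← map_mul, ← ofAdd_add, neg_add_cancel]
        simp
      have hwE : wK (cs.wordProd (l.take j)) (Eelt exp (α (l.get ⟨j, hj⟩)))
          = ((exp (Multiplicative.ofAdd (-(wΛ (cs.wordProd (l.take j))
              (α (l.get ⟨j, hj⟩))))) : Kˣ) : K) - 1 := by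
        show wK (cs.wordProd (l.take j))
            (((exp (Multiplicative.ofAdd (-(α (l.get ⟨j, hj⟩)))) : Kˣ) : K) - 1) = _
        rw [map_sub, map_one, hwexp, map_neg]
      have hβ0 : wΛ (cs.wordProd (l.take j)) (α (l.get ⟨j, hj⟩)) ≠ 0 := hα0 _ _
      have hxne : ((exp (Multiplicative.ofAdd (-(wΛ (cs.wordProd (l.take j))
            (α (l.get ⟨j, hj⟩))))) : Kˣ) : K) ≠ 1 :=
        hexp_ne _ (neg_ne_zero.mpr hβ0)
      have hyne : ((exp (Multiplicative.ofAdd (wΛ (cs.wordProd (l.take j))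
            (α (l.get ⟨j, hj⟩)))) : Kˣ) : K) ≠ 1 := hexp_ne _ hβ0
      have hx1 : ((exp (Multiplicative.ofAdd (-(wΛ (cs.wordProd (l.take j))
            (α (l.get ⟨j, hj⟩))))) : Kˣ) : K) - 1 ≠ 0 := sub_ne_zero.mpr hxne
      have hy1 : (1 : K) - ((exp (Multiplicative.ofAdd (wΛ (cs.wordProd (l.take j))
            (α (l.get ⟨j, hj⟩)))) : Kˣ) : K) ≠ 0 := sub_ne_zero.mpr (Ne.symm hyne)
      rw [hwE] at hYs
      have hmulexp : Y (cs.wordProd (l.take j))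
            * algebraMap K H ((t1 + t2) / (((exp (Multiplicative.ofAdd
              (-(wΛ (cs.wordProd (l.take j)) (α (l.get ⟨j, hj⟩))))) : Kˣ) : K) - 1))
          = ((t1 + t2) / (((exp (Multiplicative.ofAdd
              (-(wΛ (cs.wordProd (l.take j)) (α (l.get ⟨j, hj⟩))))) : Kˣ) : K) - 1))
            • Y (cs.wordProd (l.take j)) := by
        rw [← Algebra.commutes, ← Algebra.smul_def]
      constructor
      · rw [hw1, hYs, mul_add, map_add,
          eps_mul_simple cs hb h hbasis hmul t1 t2 hquad hsum _ (l.get ⟨j, hj⟩),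
          hmulexp, map_smul, smul_eq_mul, ih1, Finset.prod_range_succ, dif_pos hj]
        have hfac : (1 : K) + (t1 + t2) / (((exp (Multiplicative.ofAdd
              (-(wΛ (cs.wordProd (l.take j)) (α (l.get ⟨j, hj⟩))))) : Kˣ) : K) - 1)
            = (1 - q⁻¹ * ((exp (Multiplicative.ofAdd (wΛ (cs.wordProd (l.take j))
                (α (l.get ⟨j, hj⟩)))) : Kˣ) : K)) /
              (1 - ((exp (Multiplicative.ofAdd (wΛ (cs.wordProd (l.take j))
                (α (l.get ⟨j, hj⟩)))) : Kˣ) : K)) := by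
          rw [ht1, ht2]
          exact frac_helper hxy hx1 hy1 hq
        rw [← hfac]
        ring
      · rw [hw1, hYs, mul_add]
        apply Submodule.add_mem
        · exact mem_lowSpan_mul_simple cs h hmul t1 t2 hquad
            (show cs.length (cs.wordProd (l.take j))
              < cs.length (cs.wordProd (l.take j) * cs.simple (l.get ⟨j, hj⟩)) from by
                rw [hstep_len j hj]; omega) ih2
        · rw [hmulexp]
          apply Submodule.smul_mem
          refine lowSpan_mono cs h ?_ ih2
          apply ble_mul_simple_of_lt
          rw [hstep_len j hj]; omega
  obtain ⟨hepsv, hmemv⟩ := main l.length (le_refl _)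
  rw [List.take_length, hl] at hepsv hmemv
  have hsum_eq : ∑ w ∈ Finset.univ.filter (fun w => bruhatLE cs w v), pCoeff hb Y w v
      = eps hb (Y v) := by
    rw [eps_apply]
    apply Finset.sum_subset (Finset.filter_subset _ _)
    intro w _ hwnot
    have hnle : ¬ bruhatLE cs w v := by
      intro hcon
      exact hwnot (Finset.mem_filter.mpr ⟨Finset.mem_univ w, hcon⟩)
    exact repr_eq_zero_of_mem_lowSpan cs hb h hbasis hmemv hnle
  rw [hsum_eq, hepsv]
  rw [← Fin.prod_univ_eq_prod_range (fun k => (if hk : k < l.length then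
            (1 - q⁻¹ * ((exp (Multiplicative.ofAdd
                (wΛ (cs.wordProd (l.take k)) (α (l.get ⟨k, hk⟩)))) : Kˣ) : K)) /
            (1 - ((exp (Multiplicative.ofAdd
                (wΛ (cs.wordProd (l.take k)) (α (l.get ⟨k, hk⟩)))) : Kˣ) : K))
          else 1)) l.length]
  apply Finset.prod_congr rfl
  intro j _
  rw [dif_pos j.isLt]
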